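/- Suppose for all k in {m,…,M}, S(k) ≤ T(k) + N·(2^k + η), where S(k), T(k) ≥ 0, N ≥ 1, η ≥ 0, and suppose n* ≥ Σ_{k=m}^{M} T(k)/2^{k+1} and n ≤ Σ_{k=m}^{M} S(k)/2^{k-1}. Then n ≤ 4·n* + N·(4·(M−m+1) + 4η/2^m). -/

import Mathlib

lemma geom_aux (M : ℤ) : ∀ d : ℕ, ∀ m : ℤ, m + d = M →
    ∑ k ∈ Finset.Icc m M, (2:ℝ)^(1-k) ≤ 2^(2-m) := by
  intro d
  induction d with
  | zero =>
    intro m hm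
    have hmM : m = M := by omega
    subst hmM
    simp only [Finset.Icc_self, Finset.sum_singleton]
    have h1 : (2:ℝ)^(2-m) = 2 * 2^(1-m) := by
      rw [show (2:ℤ) - m = 1 + (1-m) by ring, zpow_add₀ (two_ne_zero), zpow_one]
    rw [h1]
    nlinarith [zpow_pos (show (0:ℝ) < 2 by norm_num) (1-m)]
  | succ d ih =>
    intro m hm
    have hlt : m < M := by omega
    have hins : Finset.Icc m M = insert m (Finset.Icc (m+1) M) := by
      ext x; simp only [Finset.mem_Icc, Finset.mem_insert]; omega
    have hnot : m ∉ Finset.Icc (m+1) M := by simp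
    rw [hins, Finset.sum_insert hnot]
    have h2 := ih (m+1) (by omega)
    have h3 : (2:ℝ)^(2-(m+1)) = 2^(1-m) := by rw [show (2:ℤ)-(m+1) = 1-m by ring]
    have h4 : (2:ℝ)^(2-m) = 2^(1-m) + 2^(1-m) := by
      rw [show (2:ℤ) - m = 1 + (1-m) by ring, zpow_add₀ (two_ne_zero), zpow_one]; ring
    rw [h3] at h2
    linarith

/-- abstract competitive-ratio counting argument:
from `S(k) ≤ T(k) + N(2^k + η)`, `n* ≥ Σ T(k)/2^{k+1}` and `n ≤ Σ S(k)/2^{k-1}`,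
conclude `n ≤ 4 n* + N (4(M-m+1) + 4η/2^m)`. -/
theorem stmt_7 (m M : ℤ) (hmM : m ≤ M) (S T : ℤ → ℝ) (N η n nstar : ℝ)
    (hS : ∀ k, 0 ≤ S k) (hT : ∀ k, 0 ≤ T k) (hN : 1 ≤ N) (hη : 0 ≤ η)
    (hwork : ∀ k ∈ Finset.Icc m M, S k ≤ T k + N * ((2:ℝ)^k + η))
    (hnstar : (∑ k ∈ Finset.Icc m M, T k / (2:ℝ)^(k+1)) ≤ nstar)
    (hn : n ≤ ∑ k ∈ Finset.Icc m M, S k / (2:ℝ)^(k-1)) :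
    n ≤ 4 * nstar + N * (4 * ((M : ℝ) - (m : ℝ) + 1) + 4 * η / (2:ℝ)^m) := by
  have hN0 : (0:ℝ) ≤ N := by linarith
  have hpow : ∀ k : ℤ, (0:ℝ) < (2:ℝ)^k := fun k => zpow_pos (by norm_num) k
  have hpt : ∀ k ∈ Finset.Icc m M,
      S k / (2:ℝ)^(k-1) ≤ 4 * (T k / (2:ℝ)^(k+1)) + 2 * N + N * η * (2:ℝ)^(1-k) := by
    intro k hk
    have hw := hwork k hk
    have e1 : (2:ℝ)^(k+1) = 4 * 2^(k-1) := by
      rw [show k+1 = (k-1)+2 by ring, zpow_add₀ (two_ne_zero)]; ring_nf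
    have e2 : (2:ℝ)^k = 2 * 2^(k-1) := by
      rw [show k = (k-1)+1 by ring, zpow_add₀ (two_ne_zero), zpow_one]; ring
    have e3 : (2:ℝ)^(1-k) * 2^(k-1) = 1 := by
      rw [← zpow_add₀ (two_ne_zero : (2:ℝ) ≠ 0)]; norm_num
    have hp := hpow (k-1)
    rw [div_le_iff₀ hp]
    have key : (4 * (T k / (2:ℝ)^(k+1)) + 2 * N + N * η * (2:ℝ)^(1-k)) * 2^(k-1)
        = T k + N * ((2:ℝ)^k + η) := by
      rw [e1, e2]
      field_simp
      linear_combination (N * η) * e3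
    rw [key]; exact hw
  have h1 : n ≤ ∑ k ∈ Finset.Icc m M,
      (4 * (T k / (2:ℝ)^(k+1)) + 2 * N + N * η * (2:ℝ)^(1-k)) :=
    hn.trans (Finset.sum_le_sum hpt)
  have hsplit : ∑ k ∈ Finset.Icc m M,
      (4 * (T k / (2:ℝ)^(k+1)) + 2 * N + N * η * (2:ℝ)^(1-k))
      = 4 * (∑ k ∈ Finset.Icc m M, T k / (2:ℝ)^(k+1))
        + 2 * N * ((Finset.Icc m M).card : ℝ)
        + N * η * (∑ k ∈ Finset.Icc m M, (2:ℝ)^(1-k)) := by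
    rw [Finset.sum_add_distrib, Finset.sum_add_distrib, ← Finset.mul_sum,
      Finset.sum_const, ← Finset.mul_sum, nsmul_eq_mul]
    ring
  rw [hsplit] at h1
  have hcard : ((Finset.Icc m M).card : ℝ) = (M:ℝ) - (m:ℝ) + 1 := by
    have hz : ((Finset.Icc m M).card : ℤ) = M + 1 - m := by rw [Int.card_Icc]; omega
    have hr := congrArg (fun z : ℤ => (z:ℝ)) hz
    push_cast at hr
    linarith
  have hgeom : ∑ k ∈ Finset.Icc m M, (2:ℝ)^(1-k) ≤ 2^(2-m) :=
    geom_aux M (M - m).toNat m (by omega)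
  have hge : (2:ℝ)^(2-m) = 4 / (2:ℝ)^m := by
    rw [show (2:ℤ) - m = 2 + (-m) by ring, zpow_add₀ (two_ne_zero), zpow_neg]
    norm_num
    rw [div_eq_mul_inv]
  have hMm : (0:ℝ) ≤ (M:ℝ) - (m:ℝ) + 1 := by
    have : (m:ℝ) ≤ (M:ℝ) := by exact_mod_cast hmM
    linarith
  have hgeom' : N * η * (∑ k ∈ Finset.Icc m M, (2:ℝ)^(1-k)) ≤ N * η * (4 / (2:ℝ)^m) := by
    rw [← hge]
    exact mul_le_mul_of_nonneg_left hgeom (by positivity)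
  have hts : 4 * (∑ k ∈ Finset.Icc m M, T k / (2:ℝ)^(k+1)) ≤ 4 * nstar := by linarith
  rw [hcard] at h1
  have h2N : 2 * N * ((M:ℝ) - (m:ℝ) + 1) ≤ N * (4 * ((M:ℝ) - (m:ℝ) + 1)) := by
    nlinarith
  have hfin : N * η * (4 / (2:ℝ)^m) = N * (4 * η / (2:ℝ)^m) := by ring
  calc n ≤ 4 * (∑ k ∈ Finset.Icc m M, T k / (2:ℝ)^(k+1))
            + 2 * N * ((M:ℝ) - (m:ℝ) + 1)
            + N * η * (∑ k ∈ Finset.Icc m M, (2:ℝ)^(1-k)) := h1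
    _ ≤ 4 * nstar + N * (4 * ((M:ℝ) - (m:ℝ) + 1)) + N * (4 * η / (2:ℝ)^m) := by
        rw [← hfin]; linarith
    _ = 4 * nstar + N * (4 * ((M:ℝ) - (m:ℝ) + 1) + 4 * η / (2:ℝ)^m) := by ring
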